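/- In the word model, for a word x of length l(x) with 0 < l(x) < M, the relative likelihood L(r(x)|x)/L(x|x) = (1/(k+1) − δ/k)/(1/(k+1) + δ) can be made smaller than any ε > 0 by choosing k large enough, while the probability under θ that the observation x satisfies r(x) = θ equals k/(k+1) − δ, which tends to 1 − δ as k → ∞. -/

import Mathlib

open Filter

/-- In the word model: (i) the relative likelihood of `r(x)` versus the MLE `x` can be
made arbitrarily small by taking `k` large; (ii) `P_θ(r(X) = θ) = k/(k+1) − δ → 1 − δ`. -/
theorem word_model_likelihood (δ : ℝ) (hδ : 0 < δ) :
    (∀ ε > 0, ∃ K : ℕ, ∀ k : ℕ, K ≤ k →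
        (1 / ((k : ℝ) + 1) - δ / k) / (1 / ((k : ℝ) + 1) + δ) < ε) ∧
    (∀ k : ℕ, 1 ≤ k →
        (k : ℝ) * (1 / ((k : ℝ) + 1) - δ / k) = (k : ℝ) / ((k : ℝ) + 1) - δ) ∧
    Tendsto (fun k : ℕ => (k : ℝ) / ((k : ℝ) + 1) - δ) atTop (nhds (1 - δ)) := by
  refine ⟨?_, ?_, ?_⟩
  · intro ε hε
    obtain ⟨K, hK⟩ := exists_nat_gt (1 / (δ * ε))
    refine ⟨K, fun k hk => ?_⟩
    have hk1 : (0:ℝ) < (k:ℝ) + 1 := by positivity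
    have hKk : (1 : ℝ) / (δ * ε) < (k:ℝ) + 1 := by
      calc (1:ℝ) / (δ * ε) < (K:ℝ) := hK
        _ ≤ (k:ℝ) := by exact_mod_cast hk
        _ ≤ (k:ℝ) + 1 := by linarith
    have hden : (0:ℝ) < 1 / ((k : ℝ) + 1) + δ := by positivity
    have hnum : (1 / ((k : ℝ) + 1) - δ / k) ≤ 1 / ((k:ℝ) + 1) := by
      have : (0:ℝ) ≤ δ / k := by positivity
      linarith
    calc (1 / ((k : ℝ) + 1) - δ / k) / (1 / ((k : ℝ) + 1) + δ)
        ≤ (1 / ((k:ℝ) + 1)) / (1 / ((k : ℝ) + 1) + δ) := by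
          gcongr
      _ ≤ (1 / ((k:ℝ) + 1)) / δ := by
          gcongr
          linarith [one_div_nonneg.mpr hk1.le]
      _ < ε := by
          rw [div_div, div_lt_iff₀ (by positivity)]
          rw [div_lt_iff₀ (by positivity)] at hKk
          linarith [mul_comm (((k:ℝ)+1)*δ) ε]
  · intro k hk
    have : (k:ℝ) ≠ 0 := by positivity
    field_simp
  · have h1 : Tendsto (fun k : ℕ => (k : ℝ) / ((k : ℝ) + 1)) atTop (nhds 1) := by
      have h := tendsto_one_div_add_atTop_nhds_zero_nat (𝕜 := ℝ)
      have : Tendsto (fun k : ℕ => 1 - 1 / ((k:ℝ) + 1)) atTop (nhds (1 - 0)) :=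
        tendsto_const_nhds.sub h
      simpa using this.congr (fun k => by
        have hk1 : ((k:ℝ) + 1) ≠ 0 := by positivity
        field_simp; ring)
    simpa using h1.sub (tendsto_const_nhds : Tendsto (fun _ : ℕ => δ) atTop (nhds δ))
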